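/- Let (Z_i, R_i), i ∈ ℕ, be a disjoint collection of minimal topological dynamical systems. For every minimal system (X,T) and every ε > 0, for all sufficiently large i the following holds: for every joining J of (X,T) and (Z_i,R_i) and every z ∈ Z_i, the set {x ∈ X : (x,z) ∈ J} is ε-dense in X, i.e. every point of X lies within distance ε of this set. -/

import Mathlib

/-- A topological dynamical system: a nonempty compact metric space together with a
continuous self-map. -/
structure MetricDynSystem where
  carrier : Type
  [metric : MetricSpace carrier]
  [cpt : CompactSpace carrier]
  [carrier_nonempty : Nonempty carrier]
  map : carrier → carrier
  continuous_map : Continuous map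

attribute [instance] MetricDynSystem.metric MetricDynSystem.cpt MetricDynSystem.carrier_nonempty

/-- A system is minimal if every point has dense forward orbit `{T^n x : n ∈ ℕ}`. -/
def MetricDynSystem.Minimal (S : MetricDynSystem) : Prop :=
  ∀ x : S.carrier, Dense {y : S.carrier | ∃ n : ℕ, 0 < n ∧ S.map^[n] x = y}

/-- The product of the systems `Z i` over a finite index set `F`. -/
def prodSystem (Z : ℕ → MetricDynSystem) (F : Finset ℕ) : MetricDynSystem where
  carrier := ∀ i : F, (Z i.1).carrier
  metric := inferInstance
  cpt := inferInstance
  carrier_nonempty := inferInstance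
  map := fun z i => (Z i.1).map (z i)
  continuous_map := continuous_pi fun i => ((Z i.1).continuous_map).comp (continuous_apply i)

/-- A collection of minimal systems is disjoint if every finite product is minimal. -/
def IsDisjointFamily (Z : ℕ → MetricDynSystem) : Prop :=
  ∀ F : Finset ℕ, (prodSystem Z F).Minimal

/-- A joining of two systems: a nonempty closed invariant subset of the product system
whose projections to both coordinates are onto. -/
def IsJoining (S₁ S₂ : MetricDynSystem) (J : Set (S₁.carrier × S₂.carrier)) : Prop :=
  J.Nonempty ∧ IsClosed J ∧ (∀ q ∈ J, (S₁.map q.1, S₂.map q.2) ∈ J) ∧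
    Prod.fst '' J = Set.univ ∧ Prod.snd '' J = Set.univ


open Metric Set

lemma minimal_closed_inv (S : MetricDynSystem) (hS : S.Minimal) (A : Set S.carrier)
    (hc : IsClosed A) (hi : ∀ a ∈ A, S.map a ∈ A) (hne : A.Nonempty) : A = Set.univ := by
  obtain ⟨a, ha⟩ := hne
  have horb : ∀ n, S.map^[n] a ∈ A := by
    intro n
    induction n with
    | zero => simpa using ha
    | succ n ih => rw [Function.iterate_succ_apply']; exact hi _ ih
  have hsub : {y | ∃ n, 0 < n ∧ S.map^[n] a = y} ⊆ A := by
    rintro y ⟨n, -, rfl⟩; exact horb n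
  refine Set.eq_univ_of_univ_subset ?_
  rw [← (hS a).closure_eq]
  exact closure_minimal hsub hc

lemma minimal_surj (S : MetricDynSystem) (hS : S.Minimal) : Function.Surjective S.map := by
  have h : Set.range S.map = Set.univ := by
    apply minimal_closed_inv S hS
    · exact (isCompact_range S.continuous_map).isClosed
    · rintro a ⟨b, rfl⟩; exact ⟨S.map b, rfl⟩
    · exact ⟨S.map (Classical.arbitrary _), _, rfl⟩
  intro y
  have : y ∈ Set.range S.map := h ▸ Set.mem_univ y
  exact this

lemma minimal_cover (X : MetricDynSystem) (hX : X.Minimal) (B : Set X.carrier)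
    (hB : IsOpen B) (hne : B.Nonempty) :
    ∃ N : ℕ, ∀ x : X.carrier, ∃ n, 0 < n ∧ n ≤ N ∧ X.map^[n] x ∈ B := by
  have hcov : (Set.univ : Set X.carrier) ⊆ ⋃ n : ℕ, X.map^[n+1] ⁻¹' B := by
    intro x _
    obtain ⟨y, ⟨n, hn, rfl⟩, hyB⟩ := (hX x).exists_mem_open hB hne
    refine Set.mem_iUnion.2 ⟨n - 1, ?_⟩
    simpa [Nat.sub_add_cancel hn] using hyB
  obtain ⟨t, ht⟩ := isCompact_univ.elim_finite_subcover _
    (fun n => (X.continuous_map.iterate (n+1)).isOpen_preimage _ hB) hcov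
  refine ⟨t.sup id + 1, fun x => ?_⟩
  obtain ⟨n, hnt, hx⟩ := Set.mem_iUnion₂.1 (ht (Set.mem_univ x))
  exact ⟨n+1, Nat.succ_pos n, Nat.succ_le_succ (Finset.le_sup (f := id) hnt), hx⟩

lemma joining_iterate {X S : MetricDynSystem} {J : Set (X.carrier × S.carrier)}
    (hJ : ∀ q ∈ J, (X.map q.1, S.map q.2) ∈ J) {x : X.carrier} {z : S.carrier}
    (h : (x, z) ∈ J) (m : ℕ) : (X.map^[m] x, S.map^[m] z) ∈ J := by
  induction m with
  | zero => simpa using h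
  | succ m ih =>
    rw [Function.iterate_succ_apply', Function.iterate_succ_apply']
    exact hJ _ ih

lemma proj_full (Z : ℕ → MetricDynSystem) (hdisj : IsDisjointFamily Z)
    (X : MetricDynSystem) (F : Finset ℕ)
    (J : ∀ i, Set (X.carrier × (Z i).carrier))
    (hJ : ∀ i, IsJoining X (Z i) (J i))
    (ζ : ∀ j : F, (Z j.1).carrier) :
    ∃ x : X.carrier, ∀ j : F, (x, ζ j) ∈ J j.1 := by
  classical
  set P := prodSystem Z F with hP
  let W : Set (X.carrier × P.carrier) := {q | ∀ j : F, (q.1, q.2 j) ∈ J j.1}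
  have hWclosed : IsClosed W := by
    have hW : W = ⋂ j : F, (fun q : X.carrier × P.carrier => (q.1, q.2 j)) ⁻¹' (J j.1) := by
      ext q; simp [W, Set.mem_iInter]
    rw [hW]
    exact isClosed_iInter fun j =>
      ((hJ j.1).2.1).preimage (continuous_fst.prodMk ((continuous_apply j).comp continuous_snd))
  have hA : Prod.snd '' W = Set.univ := by
    apply minimal_closed_inv P (hdisj F)
    · exact (hWclosed.isCompact.image continuous_snd).isClosed
    · rintro a ⟨q, hq, rfl⟩
      exact ⟨(X.map q.1, P.map q.2), fun j => (hJ j.1).2.2.1 _ (hq j), rfl⟩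
    · obtain ⟨x0⟩ := X.carrier_nonempty
      have hz : ∀ j : F, ∃ w, (x0, w) ∈ J j.1 := by
        intro j
        have h1 : x0 ∈ Prod.fst '' (J j.1) := by rw [(hJ j.1).2.2.2.1]; trivial
        obtain ⟨⟨a, b⟩, hq, hq1⟩ := h1
        simp only at hq1
        subst hq1
        exact ⟨b, hq⟩
      choose w hw using hz
      exact ⟨w, ⟨(x0, w), fun j => hw j, rfl⟩⟩
  have hζ : ζ ∈ Prod.snd '' W := hA ▸ Set.mem_univ _
  obtain ⟨q, hq, hq2⟩ := hζ
  exact ⟨q.1, fun j => hq2 ▸ hq j⟩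

theorem joinings_eventually_eps_dense
    (Z : ℕ → MetricDynSystem) (hZ : ∀ i, (Z i).Minimal) (hdisj : IsDisjointFamily Z)
    (X : MetricDynSystem) (hX : X.Minimal) (ε : ℝ) (hε : 0 < ε) :
    ∃ I : ℕ, ∀ i : ℕ, I ≤ i →
      ∀ J : Set (X.carrier × (Z i).carrier), IsJoining X (Z i) J →
        ∀ z : (Z i).carrier, ∀ x₀ : X.carrier,
          ∃ x : X.carrier, (x, z) ∈ J ∧ dist x₀ x ≤ ε := by
  classical
  by_contra hcon
  push_neg at hcon
  -- The set of "bad" indices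
  set Bad : Set ℕ := {i | ∃ J, IsJoining X (Z i) J ∧
      ∃ z x₀, ∀ x : X.carrier, (x, z) ∈ J → ε < dist x₀ x} with hBadDef
  have hBadInf : Bad.Infinite := by
    by_contra hfin
    rw [Set.not_infinite] at hfin
    obtain ⟨b, hb⟩ := hfin.bddAbove
    obtain ⟨i, hib, J, hJ, z, x₀, hx⟩ := hcon (b + 1)
    have : i ∈ Bad := ⟨J, hJ, z, x₀, hx⟩
    have := hb this
    omega
  -- data for every index (trivial joining for good indices)
  have hdata : ∀ i : ℕ, ∃ (J : Set (X.carrier × (Z i).carrier)) (z : (Z i).carrier),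
      IsJoining X (Z i) J ∧ (i ∈ Bad → ∃ x₀, ∀ x, (x, z) ∈ J → ε < dist x₀ x) := by
    intro i
    by_cases h : i ∈ Bad
    · obtain ⟨J, hJ, z, x₀, hx⟩ := h
      exact ⟨J, z, hJ, fun _ => ⟨x₀, hx⟩⟩
    · refine ⟨Set.univ, Classical.arbitrary _, ?_, fun hi => absurd hi h⟩
      refine ⟨⟨(Classical.arbitrary _, Classical.arbitrary _), trivial⟩, isClosed_univ,
        fun _ _ => trivial, ?_, ?_⟩
      · refine Set.eq_univ_of_forall fun x => ⟨(x, Classical.arbitrary _), trivial, rfl⟩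
      · refine Set.eq_univ_of_forall fun w => ⟨(Classical.arbitrary _, w), trivial, rfl⟩
  choose J z hJoin hbad using hdata
  have hx₀' : ∀ i : ℕ, ∃ x₀ : X.carrier, i ∈ Bad → ∀ x, (x, z i) ∈ J i → ε < dist x₀ x := by
    intro i
    by_cases h : i ∈ Bad
    · obtain ⟨x₀, hx⟩ := hbad i h
      exact ⟨x₀, fun _ => hx⟩
    · exact ⟨Classical.arbitrary _, fun hi => absurd hi h⟩
  choose x₀ hx₀ using hx₀'
  -- finite (ε/2)-net of X
  obtain ⟨t, ht⟩ := isCompact_univ.elim_finite_subcover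
    (fun p : X.carrier => Metric.ball p (ε / 2)) (fun p => Metric.isOpen_ball)
    (fun x _ => Set.mem_iUnion.2 ⟨x, Metric.mem_ball_self (half_pos hε)⟩)
  have hcen : ∀ i : ℕ, ∃ p ∈ t, x₀ i ∈ Metric.ball p (ε / 2) := by
    intro i
    simpa using Set.mem_iUnion₂.1 (ht (Set.mem_univ (x₀ i)))
  choose cen hcent hcenb using hcen
  -- pigeonhole: a single net point with infinitely many bad indices
  have hpig : ∃ p ∈ t, {i | i ∈ Bad ∧ cen i = p}.Infinite := by
    by_contra h
    push_neg at h
    have hsub : Bad ⊆ ⋃ p ∈ t, {i | i ∈ Bad ∧ cen i = p} :=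
      fun i hi => Set.mem_iUnion₂.2 ⟨cen i, hcent i, hi, rfl⟩
    exact hBadInf (Set.Finite.subset
      (Set.Finite.biUnion t.finite_toSet fun p hp => h p hp) hsub)
  obtain ⟨p, hpt, hSinf⟩ := hpig
  set S : Set ℕ := {i | i ∈ Bad ∧ cen i = p} with hSdef
  -- all bad fibers (for i ∈ S) avoid the closed ball K around p
  have havoid : ∀ i ∈ S, ∀ x : X.carrier, (x, z i) ∈ J i →
      x ∉ Metric.closedBall p (ε / 2) := by
    rintro i ⟨hiB, hip⟩ x hxJ hxK
    have h1 : ε < dist (x₀ i) x := hx₀ i hiB x hxJ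
    have h2 : dist (x₀ i) (cen i) < ε / 2 := Metric.mem_ball.1 (hcenb i)
    rw [hip] at h2
    have h3 : dist x p ≤ ε / 2 := Metric.mem_closedBall.1 hxK
    have h4 : dist (x₀ i) x ≤ dist (x₀ i) p + dist p x := dist_triangle _ _ _
    rw [dist_comm p x] at h4
    linarith
  -- cover X by backward iterates of the ball B
  obtain ⟨N, hN⟩ := minimal_cover X hX (Metric.ball p (ε / 2)) Metric.isOpen_ball
    ⟨p, Metric.mem_ball_self (half_pos hε)⟩
  -- N distinct indices in S
  let e : ℕ ↪ S := hSinf.natEmbedding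
  let f : ℕ → ℕ := fun n => (e n : ℕ)
  have hf : Function.Injective f := fun a b h => e.injective (Subtype.ext h)
  have hfS : ∀ n, f n ∈ S := fun n => (e n).2
  set F : Finset ℕ := (Finset.range N).image f with hFdef
  -- time assignment
  set τ : ℕ → ℕ := fun i => if h : ∃ n, n < N ∧ f n = i then h.choose + 1 else 1 with hτdef
  have hτ : ∀ n, n < N → τ (f n) = n + 1 := by
    intro n hn
    have hex : ∃ m, m < N ∧ f m = f n := ⟨n, hn, rfl⟩
    have hch : hex.choose = n := hf hex.choose_spec.2
    simp only [hτdef, dif_pos hex, hch]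
  -- pull back each bad point by τ i iterates
  have hsurj : ∀ i : ℕ, ∃ w, (Z i).map^[τ i] w = z i :=
    fun i => ((minimal_surj _ (hZ i)).iterate (τ i)) (z i)
  choose z' hz' using hsurj
  -- common fiber point over (z' i)_{i ∈ F}
  obtain ⟨x, hx⟩ := proj_full Z hdisj X F J hJoin (fun j => z' j.1)
  -- the orbit of x must enter the ball, contradiction
  obtain ⟨m, hm0, hmN, hmB⟩ := hN x
  have hn : m - 1 < N := by omega
  have hiF : f (m - 1) ∈ F := Finset.mem_image.2 ⟨m - 1, Finset.mem_range.2 hn, rfl⟩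
  have hxz : (x, z' (f (m - 1))) ∈ J (f (m - 1)) := hx ⟨f (m - 1), hiF⟩
  have hit := joining_iterate (hJoin (f (m - 1))).2.2.1 hxz (τ (f (m - 1)))
  rw [hz'] at hit
  rw [hτ (m - 1) hn] at hit
  have hm1 : m - 1 + 1 = m := by omega
  rw [hm1] at hit
  exact havoid _ (hfS (m - 1)) _ hit (Metric.ball_subset_closedBall hmB)
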